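/- Let c_1, …, c_k, c ∈ ℝ^(2^n). Then the following are equivalent: (1) for all h ∈ cl Γ_n^*, if c_i·h ≥ 0 for all i ∈ {1,…,k} then c·h ≥ 0; (2) for every ε > 0 there exist λ_1 ≥ 0, …, λ_k ≥ 0 such that for all h ∈ cl Γ_n^*, c·h + ε·h(Fin n) ≥ ∑_{i=1}^{k} λ_i·(c_i·h), where h(Fin n) denotes the value of h on the full set of all n indices. Moreover, if the set {c_1, …, c_k} has slack (there exists h ∈ cl Γ_n^* with c_i·h > 0 for all i), then in (2) one can take ε = 0, i.e. (1) is equivalent to: there exist λ_1 ≥ 0, …, λ_k ≥ 0 such that for all h ∈ cl Γ_n^*, c·h ≥ ∑_{i=1}^{k} λ_i·(c_i·h). -/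

import Mathlib

/-- The marginal probability `q_α(v)` of the joint outcome `v` of the variables in `α`. -/
noncomputable def marginalProb {n N : ℕ} (p : Fin N → ℝ) (X : Fin n → Fin N → ℕ)
    (α : Finset (Fin n)) (v : {i // i ∈ α} → ℕ) : ℝ :=
  ∑ ω ∈ Finset.univ.filter (fun ω => ∀ i : {i // i ∈ α}, X i.1 ω = v i), p ω

/-- The base-2 Shannon entropy of the joint marginal distribution on `α`. -/
noncomputable def entropyOn {n N : ℕ} (p : Fin N → ℝ) (X : Fin n → Fin N → ℕ)
    (α : Finset (Fin n)) : ℝ :=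
  (∑' v : ({i // i ∈ α} → ℕ), Real.negMulLog (marginalProb p X α v)) / Real.log 2

/-- `h : Finset (Fin n) → ℝ` is entropic if it is the entropy profile of `n` jointly
distributed random variables on a nonempty finite probability space. -/
def IsEntropic (n : ℕ) (h : Finset (Fin n) → ℝ) : Prop :=
  ∃ (N : ℕ) (p : Fin N → ℝ) (X : Fin n → Fin N → ℕ), 0 < N ∧
    (∀ ω, 0 ≤ p ω) ∧ (∑ ω, p ω) = 1 ∧ ∀ α, h α = entropyOn p X α

/-- The closed convex cone `cl Γ_n^*` of almost entropic vectors. -/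
def almostEntropic (n : ℕ) : Set (Finset (Fin n) → ℝ) :=
  closure {h | IsEntropic n h}

open Finset Real

namespace Ent

variable {n N : ℕ} (p : Fin N → ℝ) (X : Fin n → Fin N → ℕ) (α : Finset (Fin n))

/-- restriction of the variables to `α` -/
def restr (ω : Fin N) : {i // i ∈ α} → ℕ := fun i => X i.1 ω

/-- support of the marginal -/
noncomputable def Vset : Finset ({i // i ∈ α} → ℕ) := Finset.image (restr X α) Finset.univ

lemma marg_eq (v : {i // i ∈ α} → ℕ) :
    marginalProb p X α v = ∑ ω ∈ Finset.univ.filter (fun ω => restr X α ω = v), p ω := by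
  unfold marginalProb
  congr 1
  apply Finset.filter_congr
  intro ω _
  simp [restr, funext_iff]

lemma marg_ite (v : {i // i ∈ α} → ℕ) :
    marginalProb p X α v = ∑ ω, if restr X α ω = v then p ω else 0 := by
  rw [marg_eq, Finset.sum_filter]

lemma marg_zero_of_not_mem {v : {i // i ∈ α} → ℕ} (hv : v ∉ Vset X α) :
    marginalProb p X α v = 0 := by
  rw [marg_eq]
  apply Finset.sum_eq_zero
  intro ω hω
  rw [Finset.mem_filter] at hω
  exact absurd (hω.2 ▸ Finset.mem_image_of_mem (restr X α) (Finset.mem_univ ω)) hv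

lemma marg_nonneg (hp : ∀ ω, 0 ≤ p ω) (v : {i // i ∈ α} → ℕ) :
    0 ≤ marginalProb p X α v := by
  rw [marg_eq]; exact Finset.sum_nonneg fun ω _ => hp ω

lemma sum_marg : ∑ v ∈ Vset X α, marginalProb p X α v = ∑ ω, p ω := by
  simp_rw [marg_eq]
  exact Finset.sum_fiberwise_of_maps_to (fun ω _ => Finset.mem_image_of_mem (restr X α) (Finset.mem_univ ω)) p

lemma marg_le_one (hp : ∀ ω, 0 ≤ p ω) (hs : ∑ ω, p ω = 1) (v : {i // i ∈ α} → ℕ) :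
    marginalProb p X α v ≤ 1 := by
  by_cases hv : v ∈ Vset X α
  · calc marginalProb p X α v ≤ ∑ w ∈ Vset X α, marginalProb p X α w :=
          Finset.single_le_sum (fun w _ => marg_nonneg p X α hp w) hv
    _ = 1 := by rw [sum_marg, hs]
  · rw [marg_zero_of_not_mem p X α hv]; norm_num

lemma entropy_eq_sum : entropyOn p X α =
    (∑ v ∈ Vset X α, Real.negMulLog (marginalProb p X α v)) / Real.log 2 := by
  unfold entropyOn
  congr 1
  apply tsum_eq_sum
  intro v hv
  rw [marg_zero_of_not_mem p X α hv, Real.negMulLog_zero]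

lemma entropy_nonneg (hp : ∀ ω, 0 ≤ p ω) (hs : ∑ ω, p ω = 1) : 0 ≤ entropyOn p X α := by
  rw [entropy_eq_sum]
  apply div_nonneg
  · exact Finset.sum_nonneg fun v _ =>
      Real.negMulLog_nonneg (marg_nonneg p X α hp v) (marg_le_one p X α hp hs v)
  · exact (Real.log_pos (by norm_num)).le

lemma entropy_empty (hs : ∑ ω, p ω = 1) : entropyOn p X (∅ : Finset (Fin n)) = 0 := by
  haveI : IsEmpty {i // i ∈ (∅ : Finset (Fin n))} := ⟨fun i => Finset.notMem_empty _ i.2⟩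
  unfold entropyOn
  have h1 : ∀ v : {i // i ∈ (∅ : Finset (Fin n))} → ℕ,
      marginalProb p X ∅ v = 1 := by
    intro v
    rw [marg_ite]
    simp only [Subsingleton.elim (restr X ∅ _) v, if_true]
    exact hs
  rw [tsum_eq_single (default : {i // i ∈ (∅ : Finset (Fin n))} → ℕ)
    (fun b hb => absurd (Subsingleton.elim b default) hb)]
  rw [h1, Real.negMulLog_one, zero_div]

end Ent

lemma nml_add_le {a b : ℝ} (ha : 0 ≤ a) (hb : 0 ≤ b) :
    Real.negMulLog (a + b) ≤ Real.negMulLog a + Real.negMulLog b := by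
  have key : ∀ x y : ℝ, 0 ≤ x → 0 ≤ y → -(x * Real.log (x + y)) ≤ Real.negMulLog x := by
    intro x y hx hy
    rcases eq_or_lt_of_le hx with h | h
    · simp [← h, Real.negMulLog]
    · rw [Real.negMulLog, neg_mul, neg_le_neg_iff]
      exact mul_le_mul_of_nonneg_left (Real.log_le_log h (by linarith)) hx
  have h1 := key a b ha hb
  have h2 := key b a hb ha
  rw [add_comm b a] at h2
  have : Real.negMulLog (a + b) = -(a * Real.log (a+b)) + -(b * Real.log (a+b)) := by
    rw [Real.negMulLog]; ring
  linarith

lemma nml_sum_le {ι : Type*} [DecidableEq ι] (s : Finset ι) (f : ι → ℝ) (hf : ∀ i ∈ s, 0 ≤ f i) :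
    Real.negMulLog (∑ i ∈ s, f i) ≤ ∑ i ∈ s, Real.negMulLog (f i) := by
  induction s using Finset.induction_on with
  | empty => simp
  | @insert a s ha ih =>
    rw [Finset.sum_insert ha, Finset.sum_insert ha]
    calc Real.negMulLog (f a + ∑ i ∈ s, f i)
        ≤ Real.negMulLog (f a) + Real.negMulLog (∑ i ∈ s, f i) :=
          nml_add_le (hf a (Finset.mem_insert_self a s))
            (Finset.sum_nonneg fun i hi => hf i (Finset.mem_insert_of_mem hi))
      _ ≤ _ := by
          have := ih (fun i hi => hf i (Finset.mem_insert_of_mem hi))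
          linarith

namespace Ent
variable {n N : ℕ} (p : Fin N → ℝ) (X : Fin n → Fin N → ℕ) (α : Finset (Fin n))

/-- restriction map from full profiles to α-profiles -/
def res (w : {i // i ∈ (Finset.univ : Finset (Fin n))} → ℕ) : {i // i ∈ α} → ℕ :=
  fun i => w ⟨i.1, Finset.mem_univ _⟩

lemma res_restr (ω : Fin N) : res α (restr X Finset.univ ω) = restr X α ω := rfl

lemma marg_decomp (v : {i // i ∈ α} → ℕ) :
    marginalProb p X α v =
      ∑ w ∈ (Vset X (Finset.univ : Finset (Fin n))).filter (fun w => res α w = v),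
        marginalProb p X Finset.univ w := by
  have hmaps : ∀ ω ∈ (Finset.univ : Finset (Fin N)).filter (fun ω => res α (restr X Finset.univ ω) = v),
      restr X Finset.univ ω ∈ (Vset X (Finset.univ : Finset (Fin n))).filter (fun w => res α w = v) := by
    intro ω hω
    rw [Finset.mem_filter] at hω ⊢
    exact ⟨Finset.mem_image_of_mem _ (Finset.mem_univ ω), hω.2⟩
  have := Finset.sum_fiberwise_of_maps_to hmaps p
  rw [marg_eq]
  have hcong : (Finset.univ : Finset (Fin N)).filter (fun ω => restr X α ω = v) =
      (Finset.univ : Finset (Fin N)).filter (fun ω => res α (restr X Finset.univ ω) = v) := by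
    apply Finset.filter_congr; intro ω _; rw [res_restr]
  rw [hcong, ← this]
  apply Finset.sum_congr rfl
  intro w hw
  rw [Finset.mem_filter] at hw
  rw [marg_eq]
  congr 1
  ext ω
  simp only [Finset.mem_filter, Finset.mem_univ, true_and]
  constructor
  · intro h; exact h.2
  · intro h; exact ⟨by rw [h]; exact hw.2, h⟩
end Ent

namespace Ent
variable {n N : ℕ} (p : Fin N → ℝ) (X : Fin n → Fin N → ℕ) (α : Finset (Fin n))

lemma entropy_mono (hp : ∀ ω, 0 ≤ p ω) :
    entropyOn p X α ≤ entropyOn p X (Finset.univ : Finset (Fin n)) := by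
  rw [entropy_eq_sum, entropy_eq_sum]
  have hl : (0:ℝ) < Real.log 2 := Real.log_pos (by norm_num)
  have key : ∀ v ∈ Vset X α, Real.negMulLog (marginalProb p X α v) ≤
      ∑ w ∈ (Vset X (Finset.univ : Finset (Fin n))).filter (fun w => res α w = v),
        Real.negMulLog (marginalProb p X Finset.univ w) := by
    intro v _
    rw [marg_decomp p X α v]
    exact nml_sum_le _ _ (fun w _ => marg_nonneg p X Finset.univ hp w)
  have step : ∑ v ∈ Vset X α, Real.negMulLog (marginalProb p X α v) ≤
      ∑ v ∈ Vset X α, ∑ w ∈ (Vset X (Finset.univ : Finset (Fin n))).filter (fun w => res α w = v),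
        Real.negMulLog (marginalProb p X Finset.univ w) := Finset.sum_le_sum key
  have fib : ∑ v ∈ Vset X α, ∑ w ∈ (Vset X (Finset.univ : Finset (Fin n))).filter (fun w => res α w = v),
        Real.negMulLog (marginalProb p X Finset.univ w)
      = ∑ w ∈ Vset X (Finset.univ : Finset (Fin n)), Real.negMulLog (marginalProb p X Finset.univ w) := by
    apply Finset.sum_fiberwise_of_maps_to
    intro w hw
    rw [Vset, Finset.mem_image] at hw
    obtain ⟨ω, _, rfl⟩ := hw
    rw [res_restr]
    exact Finset.mem_image_of_mem _ (Finset.mem_univ ω)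
  rw [fib] at step
  gcongr
end Ent


namespace Ent

lemma zero_entropic (n : ℕ) : IsEntropic n (fun _ => 0) := by
  refine ⟨1, fun _ => 1, fun _ _ => 0, Nat.one_pos, fun _ => zero_le_one, by simp, ?_⟩
  intro α
  rw [entropy_eq_sum]
  have hV : Vset (n := n) (N := 1) (fun _ _ => 0) α = {restr (N := 1) (fun _ _ => 0) α 0} := by
    rw [Vset]
    apply Finset.eq_singleton_iff_unique_mem.2
    refine ⟨Finset.mem_image_of_mem _ (Finset.mem_univ _), ?_⟩
    intro w hw
    rw [Finset.mem_image] at hw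
    obtain ⟨ω, _, rfl⟩ := hw
    rw [Subsingleton.elim ω 0]
  rw [hV, Finset.sum_singleton]
  have : marginalProb (fun (_ : Fin 1) => (1:ℝ)) (fun _ _ => 0) α (restr (N := 1) (fun _ _ => 0) α 0) = 1 := by
    rw [marg_ite]
    simp [Subsingleton.elim _ (0 : Fin 1)]
  rw [this, Real.negMulLog_one, zero_div]

lemma entropic_empty {n : ℕ} {h : Finset (Fin n) → ℝ} (hh : IsEntropic n h) : h ∅ = 0 := by
  obtain ⟨N, p, X, _, _, hs, hα⟩ := hh
  rw [hα ∅, entropy_empty p X hs]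

lemma entropic_nonneg {n : ℕ} {h : Finset (Fin n) → ℝ} (hh : IsEntropic n h) (α : Finset (Fin n)) :
    0 ≤ h α := by
  obtain ⟨N, p, X, _, hp, hs, hα⟩ := hh
  rw [hα α]; exact entropy_nonneg p X α hp hs

lemma entropic_mono {n : ℕ} {h : Finset (Fin n) → ℝ} (hh : IsEntropic n h) (α : Finset (Fin n)) :
    h α ≤ h Finset.univ := by
  obtain ⟨N, p, X, _, hp, _, hα⟩ := hh
  rw [hα α, hα Finset.univ]; exact entropy_mono p X α hp

end Ent

lemma sum_prod_split {A B : Type*} [Fintype A] [Fintype B] (f : A → ℝ) (g : B → ℝ) :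
    ∑ x : A × B, f x.1 * g x.2 = (∑ a, f a) * (∑ b, g b) := by
  rw [Finset.sum_mul_sum]
  exact Fintype.sum_prod_type' (f := fun a b => f a * g b)

namespace Ent

lemma add_entropic {n : ℕ} {h1 h2 : Finset (Fin n) → ℝ}
    (H1 : IsEntropic n h1) (H2 : IsEntropic n h2) :
    IsEntropic n (fun α => h1 α + h2 α) := by
  obtain ⟨N1, p1, X1, hN1, hp1, hs1, hα1⟩ := H1
  obtain ⟨N2, p2, X2, hN2, hp2, hs2, hα2⟩ := H2
  set e := finProdFinEquiv (m := N1) (n := N2) with he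
  refine ⟨N1 * N2, fun ω => p1 (e.symm ω).1 * p2 (e.symm ω).2,
    fun i ω => Nat.pair (X1 i (e.symm ω).1) (X2 i (e.symm ω).2),
    Nat.mul_pos hN1 hN2, fun ω => mul_nonneg (hp1 _) (hp2 _), ?_, ?_⟩
  · rw [← Fintype.sum_equiv e (fun pr => p1 pr.1 * p2 pr.2)
      (fun ω => p1 (e.symm ω).1 * p2 (e.symm ω).2) (by intro pr; simp)]
    rw [Fintype.sum_prod_type]
    rw [← Finset.sum_mul_sum]
    rw [hs1, hs2, one_mul]
  · intro α
    set p : Fin (N1 * N2) → ℝ := fun ω => p1 (e.symm ω).1 * p2 (e.symm ω).2 with hpdef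
    set X : Fin n → Fin (N1 * N2) → ℕ :=
      fun i ω => Nat.pair (X1 i (e.symm ω).1) (X2 i (e.symm ω).2) with hXdef
    have hmarg : ∀ v : {i // i ∈ α} → ℕ,
        marginalProb p X α v =
          marginalProb p1 X1 α (fun i => (v i).unpair.1) *
          marginalProb p2 X2 α (fun i => (v i).unpair.2) := by
      intro v
      rw [marg_ite, marg_ite, marg_ite]
      rw [← Fintype.sum_equiv e
        (fun pr : Fin N1 × Fin N2 =>
          if restr X α (e pr) = v then p (e pr) else 0)
        (fun ω => if restr X α ω = v then p ω else 0) (fun pr => rfl)]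
      have hcond : ∀ pr : Fin N1 × Fin N2, (restr X α (e pr) = v) ↔
          ((restr X1 α pr.1 = fun i => (v i).unpair.1) ∧
           (restr X2 α pr.2 = fun i => (v i).unpair.2)) := by
        intro pr
        simp only [restr, hXdef, funext_iff, Equiv.symm_apply_apply]
        constructor
        · intro h
          constructor <;> intro i
          · have := congrArg (fun m => m.unpair.1) (h i); simpa [Nat.unpair_pair] using this
          · have := congrArg (fun m => m.unpair.2) (h i); simpa [Nat.unpair_pair] using this
        · intro ⟨ha, hb⟩ i
          rw [ha i, hb i, Nat.pair_unpair]
      have hsplit : ∀ pr : Fin N1 × Fin N2,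
          (if restr X α (e pr) = v then p (e pr) else 0) =
          (if restr X1 α pr.1 = (fun i => (v i).unpair.1) then p1 pr.1 else 0) *
          (if restr X2 α pr.2 = (fun i => (v i).unpair.2) then p2 pr.2 else 0) := by
        intro pr
        rw [if_congr (hcond pr) rfl rfl]
        by_cases hA : restr X1 α pr.1 = (fun i => (v i).unpair.1) <;>
          by_cases hB : restr X2 α pr.2 = (fun i => (v i).unpair.2) <;>
          simp [hA, hB, hpdef]
      simp_rw [hsplit]
      exact sum_prod_split
        (fun a => if restr X1 α a = (fun i => (v i).unpair.1) then p1 a else 0)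
        (fun b => if restr X2 α b = (fun i => (v i).unpair.2) then p2 b else 0)
    show h1 α + h2 α = entropyOn p X α
    rw [hα1 α, hα2 α, entropy_eq_sum p1 X1, entropy_eq_sum p2 X2, ← add_div]
    unfold entropyOn
    congr 1
    symm
    set EV : ({i // i ∈ α} → ℕ) ≃ ({i // i ∈ α} → ℕ) × ({i // i ∈ α} → ℕ) :=
      (Equiv.arrowCongr (Equiv.refl _) Nat.pairEquiv.symm).trans
        (Equiv.arrowProdEquivProdArrow _ _ _) with hEV
    have hEV1 : ∀ v, (EV v).1 = fun i => (v i).unpair.1 := fun v => rfl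
    have hEV2 : ∀ v, (EV v).2 = fun i => (v i).unpair.2 := fun v => rfl
    calc ∑' v : {i // i ∈ α} → ℕ, Real.negMulLog (marginalProb p X α v)
        = ∑' v : {i // i ∈ α} → ℕ,
            Real.negMulLog (marginalProb p1 X1 α (EV v).1 * marginalProb p2 X2 α (EV v).2) := by
          apply tsum_congr; intro v; rw [hmarg v, hEV1, hEV2]
      _ = ∑' w : ({i // i ∈ α} → ℕ) × ({i // i ∈ α} → ℕ),
            Real.negMulLog (marginalProb p1 X1 α w.1 * marginalProb p2 X2 α w.2) := by
          exact EV.tsum_eq (fun w => Real.negMulLog (marginalProb p1 X1 α w.1 * marginalProb p2 X2 α w.2))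
      _ = ∑ w ∈ (Vset X1 α) ×ˢ (Vset X2 α),
            Real.negMulLog (marginalProb p1 X1 α w.1 * marginalProb p2 X2 α w.2) := by
          apply tsum_eq_sum
          intro w hw
          rw [Finset.mem_product, not_and_or] at hw
          rcases hw with hw | hw
          · rw [marg_zero_of_not_mem p1 X1 α hw, zero_mul, Real.negMulLog_zero]
          · rw [marg_zero_of_not_mem p2 X2 α hw, mul_zero, Real.negMulLog_zero]
      _ = ∑ w1 ∈ Vset X1 α, ∑ w2 ∈ Vset X2 α,
            (marginalProb p2 X2 α w2 * Real.negMulLog (marginalProb p1 X1 α w1) +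
             marginalProb p1 X1 α w1 * Real.negMulLog (marginalProb p2 X2 α w2)) := by
          rw [Finset.sum_product]
          exact Finset.sum_congr rfl fun w1 _ => Finset.sum_congr rfl fun w2 _ =>
            Real.negMulLog_mul _ _
      _ = (∑ v ∈ Vset X1 α, Real.negMulLog (marginalProb p1 X1 α v)) +
          (∑ v ∈ Vset X2 α, Real.negMulLog (marginalProb p2 X2 α v)) := by
          simp_rw [Finset.sum_add_distrib, ← Finset.mul_sum, ← Finset.sum_mul]
          rw [sum_marg p1 X1 α, sum_marg p2 X2 α, hs1, hs2]
          ring_nf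
end Ent

namespace Ent

lemma mix_entropic {n : ℕ} {h1 h2 : Finset (Fin n) → ℝ}
    (H1 : IsEntropic n h1) (H2 : IsEntropic n h2) {μ1 μ2 : ℝ}
    (hμ1 : 0 ≤ μ1) (hμ2 : 0 ≤ μ2) (hμ : μ1 + μ2 ≤ 1) :
    IsEntropic n (fun α => μ1 * h1 α + μ2 * h2 α + if α = ∅ then 0 else
      (Real.negMulLog μ1 + Real.negMulLog μ2 + Real.negMulLog (1 - μ1 - μ2)) / Real.log 2) := by
  classical
  obtain ⟨N1, p1, X1, hN1, hp1, hs1, hα1⟩ := H1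
  obtain ⟨N2, p2, X2, hN2, hp2, hs2, hα2⟩ := H2
  set μ0 : ℝ := 1 - μ1 - μ2 with hμ0def
  set Ω' := (Fin N1 ⊕ Fin N2) ⊕ Fin 1 with hΩ'
  set EE : Ω' ≃ Fin (N1 + N2 + 1) :=
    (Equiv.sumCongr finSumFinEquiv (Equiv.refl (Fin 1))).trans finSumFinEquiv with hEE
  set P : Ω' → ℝ :=
    Sum.elim (Sum.elim (fun ω => μ1 * p1 ω) (fun ω => μ2 * p2 ω)) (fun _ => μ0) with hP
  set XX : Fin n → Ω' → ℕ :=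
    fun i => Sum.elim (Sum.elim (fun ω => 3 * X1 i ω + 1) (fun ω => 3 * X2 i ω + 2))
      (fun _ => 0) with hXX
  set p : Fin (N1 + N2 + 1) → ℝ := fun ω => P (EE.symm ω) with hpd
  set X : Fin n → Fin (N1 + N2 + 1) → ℕ := fun i ω => XX i (EE.symm ω) with hXd
  have hμ0 : 0 ≤ μ0 := by rw [hμ0def]; linarith
  have hsum_transfer : ∀ F : Fin (N1 + N2 + 1) → ℝ, ∑ ω, F ω = ∑ σ : Ω', F (EE σ) :=
    fun F => (Fintype.sum_equiv EE (fun σ => F (EE σ)) F (fun σ => rfl)).symm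
  have hptot : ∑ ω, p ω = 1 := by
    rw [hsum_transfer p]
    have : ∀ σ : Ω', p (EE σ) = P σ := by intro σ; rw [hpd]; simp
    simp_rw [this]
    rw [Fintype.sum_sum_type, Fintype.sum_sum_type]
    simp only [hP, Sum.elim_inl, Sum.elim_inr]
    rw [← Finset.mul_sum, ← Finset.mul_sum, hs1, hs2]
    simp [hμ0def]
  refine ⟨N1 + N2 + 1, p, X, by omega, ?_, hptot, ?_⟩
  · intro ω
    show 0 ≤ P (EE.symm ω)
    rcases EE.symm ω with (ω1 | ω2) | u
    · exact mul_nonneg hμ1 (hp1 ω1)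
    · exact mul_nonneg hμ2 (hp2 ω2)
    · exact hμ0
  intro α
  by_cases hαe : α = ∅
  · subst hαe
    simp only [if_true, add_zero]
    rw [entropy_empty p X hptot, entropic_empty ⟨N1, p1, X1, hN1, hp1, hs1, hα1⟩,
      entropic_empty ⟨N2, p2, X2, hN2, hp2, hs2, hα2⟩]
    ring
  · -- nonempty case
    obtain ⟨i0, hi0⟩ := Finset.nonempty_iff_ne_empty.2 hαe
    set I0 : {i // i ∈ α} := ⟨i0, hi0⟩ with hI0
    -- injections of profiles
    set J1 : ({i // i ∈ α} → ℕ) → ({i // i ∈ α} → ℕ) := fun w i => 3 * w i + 1 with hJ1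
    set J2 : ({i // i ∈ α} → ℕ) → ({i // i ∈ α} → ℕ) := fun w i => 3 * w i + 2 with hJ2
    set zf : {i // i ∈ α} → ℕ := fun _ => 0 with hzf
    have hJ1inj : Function.Injective J1 := by
      intro a b hab; funext i
      have := congrFun hab i; simp only [hJ1] at this; omega
    have hJ2inj : Function.Injective J2 := by
      intro a b hab; funext i
      have := congrFun hab i; simp only [hJ2] at this; omega
    -- marginal as a sum of three pieces
    have hmarg : ∀ v : {i // i ∈ α} → ℕ,
        marginalProb p X α v =
          (∑ ω1, if J1 (restr X1 α ω1) = v then μ1 * p1 ω1 else 0) +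
          (∑ ω2, if J2 (restr X2 α ω2) = v then μ2 * p2 ω2 else 0) +
          (if zf = v then μ0 else 0) := by
      intro v
      rw [marg_ite, hsum_transfer]
      have hcond : ∀ σ : Ω', (restr X α (EE σ) = v) ↔ ((fun i : {i // i ∈ α} => XX i.1 σ) = v) := by
        intro σ
        constructor <;> intro h <;> (funext i; have := congrFun h i) <;>
          simpa [restr, hXd] using this
      have hval : ∀ σ : Ω', p (EE σ) = P σ := by intro σ; rw [hpd]; simp
      calc ∑ σ : Ω', (if restr X α (EE σ) = v then p (EE σ) else 0)
          = ∑ σ : Ω', (if (fun i : {i // i ∈ α} => XX i.1 σ) = v then P σ else 0) := by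
            apply Finset.sum_congr rfl
            intro σ _
            rw [if_congr (hcond σ) (hval σ) rfl]
        _ = _ := by
            rw [Fintype.sum_sum_type, Fintype.sum_sum_type]
            congr 1
            · trans (∑ _u : Fin 1, if zf = v then μ0 else 0)
              · exact Finset.sum_congr rfl (fun u _ => rfl)
              · simp
    -- values of the marginal
    have hm1 : ∀ w, marginalProb p X α (J1 w) = μ1 * marginalProb p1 X1 α w := by
      intro w
      rw [hmarg]
      have e2 : (∑ ω2, if J2 (restr X2 α ω2) = J1 w then μ2 * p2 ω2 else 0) = 0 := by
        apply Finset.sum_eq_zero; intro ω2 _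
        rw [if_neg]
        intro h
        have := congrFun h I0; simp only [hJ1, hJ2] at this; omega
      have e3 : (if zf = J1 w then μ0 else 0) = 0 := by
        rw [if_neg]
        intro h
        have := congrFun h I0; simp only [hJ1, hzf] at this; omega
      rw [e2, e3, add_zero, add_zero, marg_ite, Finset.mul_sum]
      apply Finset.sum_congr rfl; intro ω1 _
      rw [mul_ite, mul_zero]
      apply if_congr _ rfl rfl
      exact ⟨fun h => hJ1inj h, fun h => by rw [h]⟩
    have hm2 : ∀ w, marginalProb p X α (J2 w) = μ2 * marginalProb p2 X2 α w := by
      intro w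
      rw [hmarg]
      have e1 : (∑ ω1, if J1 (restr X1 α ω1) = J2 w then μ1 * p1 ω1 else 0) = 0 := by
        apply Finset.sum_eq_zero; intro ω1 _
        rw [if_neg]
        intro h
        have := congrFun h I0; simp only [hJ1, hJ2] at this; omega
      have e3 : (if zf = J2 w then μ0 else 0) = 0 := by
        rw [if_neg]
        intro h
        have := congrFun h I0; simp only [hJ2, hzf] at this; omega
      rw [e1, e3, zero_add, add_zero, marg_ite, Finset.mul_sum]
      apply Finset.sum_congr rfl; intro ω2 _
      rw [mul_ite, mul_zero]
      apply if_congr _ rfl rfl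
      exact ⟨fun h => hJ2inj h, fun h => by rw [h]⟩
    have hm0 : marginalProb p X α zf = μ0 := by
      rw [hmarg]
      have e1 : (∑ ω1, if J1 (restr X1 α ω1) = zf then μ1 * p1 ω1 else 0) = 0 := by
        apply Finset.sum_eq_zero; intro ω1 _
        rw [if_neg]
        intro h
        have := congrFun h I0; simp only [hJ1, hzf] at this; omega
      have e2 : (∑ ω2, if J2 (restr X2 α ω2) = zf then μ2 * p2 ω2 else 0) = 0 := by
        apply Finset.sum_eq_zero; intro ω2 _
        rw [if_neg]
        intro h
        have := congrFun h I0; simp only [hJ2, hzf] at this; omega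
      rw [e1, e2, if_pos rfl, zero_add, zero_add]
    -- support finset
    set T : Finset ({i // i ∈ α} → ℕ) :=
      ((Vset X1 α).image J1 ∪ (Vset X2 α).image J2) ∪ {zf} with hT
    have hsupp : ∀ v, v ∉ T → marginalProb p X α v = 0 := by
      intro v hv
      simp only [hT, Finset.mem_union, Finset.mem_image, Finset.mem_singleton, not_or] at hv
      obtain ⟨⟨hv1, hv2⟩, hv3⟩ := hv
      rw [hmarg]
      have e1 : (∑ ω1, if J1 (restr X1 α ω1) = v then μ1 * p1 ω1 else 0) = 0 := by
        apply Finset.sum_eq_zero; intro ω1 _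
        rw [if_neg]
        intro h
        exact hv1 ⟨restr X1 α ω1, Finset.mem_image_of_mem _ (Finset.mem_univ ω1), h⟩
      have e2 : (∑ ω2, if J2 (restr X2 α ω2) = v then μ2 * p2 ω2 else 0) = 0 := by
        apply Finset.sum_eq_zero; intro ω2 _
        rw [if_neg]
        intro h
        exact hv2 ⟨restr X2 α ω2, Finset.mem_image_of_mem _ (Finset.mem_univ ω2), h⟩
      have e3 : (if zf = v then μ0 else 0) = 0 := by
        by_cases h : zf = v
        · exact absurd h.symm hv3
        · rw [if_neg h]
      rw [e1, e2, e3]; ring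
    -- disjointness
    have hd12 : Disjoint ((Vset X1 α).image J1) ((Vset X2 α).image J2) := by
      rw [Finset.disjoint_left]
      intro v hv1 hv2
      rw [Finset.mem_image] at hv1 hv2
      obtain ⟨a, _, ha⟩ := hv1
      obtain ⟨b, _, hb⟩ := hv2
      have := congrFun (ha.trans hb.symm) I0
      simp only [hJ1, hJ2] at this; omega
    have hdz : Disjoint ((Vset X1 α).image J1 ∪ (Vset X2 α).image J2) ({zf} : Finset _) := by
      rw [Finset.disjoint_right]
      intro v hv hvu
      rw [Finset.mem_singleton] at hv
      subst hv
      rw [Finset.mem_union, Finset.mem_image, Finset.mem_image] at hvu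
      rcases hvu with ⟨a, _, ha⟩ | ⟨b, _, hb⟩
      · have := congrFun ha I0; simp only [hJ1, hzf] at this; omega
      · have := congrFun hb I0; simp only [hJ2, hzf] at this; omega
    -- compute the entropy
    have hent : entropyOn p X α =
        (Real.negMulLog μ1 + μ1 * (∑ w ∈ Vset X1 α, Real.negMulLog (marginalProb p1 X1 α w)) +
         (Real.negMulLog μ2 + μ2 * (∑ w ∈ Vset X2 α, Real.negMulLog (marginalProb p2 X2 α w))) +
         Real.negMulLog μ0) / Real.log 2 := by
      unfold entropyOn
      congr 1
      rw [tsum_eq_sum (s := T) (fun v hv => by rw [hsupp v hv, Real.negMulLog_zero])]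
      rw [hT, Finset.sum_union hdz, Finset.sum_union hd12]
      rw [Finset.sum_image (fun a _ b _ h => hJ1inj h), Finset.sum_image (fun a _ b _ h => hJ2inj h)]
      rw [Finset.sum_singleton, hm0]
      congr 2
      · calc ∑ w ∈ Vset X1 α, Real.negMulLog (marginalProb p X α (J1 w))
            = ∑ w ∈ Vset X1 α, (marginalProb p1 X1 α w * Real.negMulLog μ1 +
                μ1 * Real.negMulLog (marginalProb p1 X1 α w)) := by
              apply Finset.sum_congr rfl; intro w _
              rw [hm1 w, Real.negMulLog_mul]
          _ = Real.negMulLog μ1 + μ1 * ∑ w ∈ Vset X1 α, Real.negMulLog (marginalProb p1 X1 α w) := by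
              rw [Finset.sum_add_distrib, ← Finset.sum_mul, ← Finset.mul_sum, sum_marg, hs1, one_mul]
      · calc ∑ w ∈ Vset X2 α, Real.negMulLog (marginalProb p X α (J2 w))
            = ∑ w ∈ Vset X2 α, (marginalProb p2 X2 α w * Real.negMulLog μ2 +
                μ2 * Real.negMulLog (marginalProb p2 X2 α w)) := by
              apply Finset.sum_congr rfl; intro w _
              rw [hm2 w, Real.negMulLog_mul]
          _ = Real.negMulLog μ2 + μ2 * ∑ w ∈ Vset X2 α, Real.negMulLog (marginalProb p2 X2 α w) := by
              rw [Finset.sum_add_distrib, ← Finset.sum_mul, ← Finset.mul_sum, sum_marg, hs2, one_mul]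
    show μ1 * h1 α + μ2 * h2 α + _ = entropyOn p X α
    rw [hent, if_neg hαe, hα1 α, hα2 α, entropy_eq_sum p1 X1 α, entropy_eq_sum p2 X2 α]
    field_simp
    ring

end Ent

namespace Ent

lemma nsmul_entropic {n : ℕ} {h : Finset (Fin n) → ℝ} (H : IsEntropic n h) :
    ∀ m : ℕ, IsEntropic n (fun α => (m : ℝ) * h α) := by
  intro m
  induction m with
  | zero => simpa using zero_entropic n
  | succ m ih =>
    have := add_entropic ih H
    convert this using 2 with α
    push_cast
    ring

lemma conic_mem {n : ℕ} {h1 h2 : Finset (Fin n) → ℝ} (H1 : IsEntropic n h1)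
    (H2 : IsEntropic n h2) {t1 t2 : ℝ} (ht1 : 0 ≤ t1) (ht2 : 0 ≤ t2) :
    (fun α => t1 * h1 α + t2 * h2 α) ∈ almostEntropic n := by
  set g : ℕ → (Finset (Fin n) → ℝ) := fun m α => t1 * h1 α + t2 * h2 α +
    (if α = ∅ then 0 else
      (Real.negMulLog (t1 / m) + Real.negMulLog (t2 / m) +
        Real.negMulLog (1 - t1 / m - t2 / m)) / Real.log 2) with hg
  have hmem : ∀ᶠ m : ℕ in Filter.atTop, g m ∈ {h | IsEntropic n h} := by
    rw [Filter.eventually_atTop]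
    obtain ⟨m0, hm0⟩ := exists_nat_ge (t1 + t2)
    refine ⟨m0 + 1, fun m hm => ?_⟩
    have hmpos : (0:ℝ) < m := by
      have : (m0 + 1 : ℕ) ≤ m := hm
      have := Nat.one_le_iff_ne_zero.1 (le_trans (Nat.le_add_left 1 m0) this)
      positivity
    have hle : t1 + t2 ≤ (m : ℝ) := by
      calc t1 + t2 ≤ (m0 : ℝ) := hm0
      _ ≤ m := by exact_mod_cast Nat.le_of_succ_le hm
    have hμ1 : 0 ≤ t1 / m := div_nonneg ht1 hmpos.le
    have hμ2 : 0 ≤ t2 / m := div_nonneg ht2 hmpos.le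
    have hμ : t1 / m + t2 / m ≤ 1 := by
      rw [← add_div, div_le_one hmpos]; exact hle
    have key := mix_entropic (nsmul_entropic H1 m) (nsmul_entropic H2 m) hμ1 hμ2 hμ
    have heq : ∀ α, t1 / (m:ℝ) * ((m:ℝ) * h1 α) + t2 / (m:ℝ) * ((m:ℝ) * h2 α) =
        t1 * h1 α + t2 * h2 α := by
      intro α; field_simp
    show IsEntropic n (g m)
    have hgm : g m = fun α => t1 / (m:ℝ) * ((m:ℝ) * h1 α) + t2 / (m:ℝ) * ((m:ℝ) * h2 α) +
        (if α = ∅ then 0 else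
          (Real.negMulLog (t1 / m) + Real.negMulLog (t2 / m) +
            Real.negMulLog (1 - t1 / m - t2 / m)) / Real.log 2) := by
      funext α
      rw [hg]
      simp only
      rw [heq α]
    rw [hgm]
    exact key
  have htend : Filter.Tendsto g Filter.atTop (nhds (fun α => t1 * h1 α + t2 * h2 α)) := by
    rw [tendsto_pi_nhds]
    intro α
    rcases eq_or_ne α ∅ with rfl | hα
    · simp only [hg, eq_self_iff_true, if_true, add_zero]
      exact tendsto_const_nhds
    · simp only [hg, if_neg hα]
      have h0 : Filter.Tendsto (fun m : ℕ => (Real.negMulLog (t1 / m) + Real.negMulLog (t2 / m) +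
          Real.negMulLog (1 - t1 / m - t2 / m)) / Real.log 2) Filter.atTop (nhds 0) := by
        have l1 : Filter.Tendsto (fun m : ℕ => t1 / (m:ℝ)) Filter.atTop (nhds 0) :=
          tendsto_const_div_atTop_nhds_zero_nat t1
        have l2 : Filter.Tendsto (fun m : ℕ => t2 / (m:ℝ)) Filter.atTop (nhds 0) :=
          tendsto_const_div_atTop_nhds_zero_nat t2
        have l3 : Filter.Tendsto (fun m : ℕ => 1 - t1 / (m:ℝ) - t2 / m) Filter.atTop (nhds 1) := by
          have := (tendsto_const_nhds (x := (1:ℝ)) (f := Filter.atTop (α := ℕ))).sub l1 |>.sub l2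
          simpa using this
        have c1 := (Real.continuous_negMulLog.tendsto 0).comp l1
        have c2 := (Real.continuous_negMulLog.tendsto 0).comp l2
        have c3 := (Real.continuous_negMulLog.tendsto 1).comp l3
        rw [Real.negMulLog_zero] at c1 c2
        rw [Real.negMulLog_one] at c3
        have := ((c1.add c2).add c3).div_const (Real.log 2)
        simpa using this
      have := (tendsto_const_nhds
        (x := t1 * h1 α + t2 * h2 α) (f := Filter.atTop (α := ℕ))).add h0
      simpa using this
  exact mem_closure_of_tendsto htend hmem

/-- `almostEntropic n` is closed under conic combinations. -/
lemma almost_conic {n : ℕ} {x y : Finset (Fin n) → ℝ} (hx : x ∈ almostEntropic n)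
    (hy : y ∈ almostEntropic n) {t1 t2 : ℝ} (ht1 : 0 ≤ t1) (ht2 : 0 ≤ t2) :
    (fun α => t1 * x α + t2 * y α) ∈ almostEntropic n := by
  set F : (Finset (Fin n) → ℝ) × (Finset (Fin n) → ℝ) → (Finset (Fin n) → ℝ) :=
    fun q α => t1 * q.1 α + t2 * q.2 α with hF
  have hFc : Continuous F := by
    apply continuous_pi
    intro α
    exact (continuous_const.mul ((continuous_apply α).comp continuous_fst)).add
      (continuous_const.mul ((continuous_apply α).comp continuous_snd))
  have hmaps : Set.MapsTo F ({h | IsEntropic n h} ×ˢ {h | IsEntropic n h}) (almostEntropic n) :=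
    fun q hq => conic_mem hq.1 hq.2 ht1 ht2
  have := hmaps.closure hFc
  rw [closure_prod_eq] at this
  have hxy : (x, y) ∈ closure {h | IsEntropic n h} ×ˢ closure {h | IsEntropic n h} := ⟨hx, hy⟩
  have hmem := this hxy
  have hcl : IsClosed (almostEntropic n) := isClosed_closure
  rwa [hcl.closure_eq] at hmem

lemma almost_zero_mem (n : ℕ) : (fun _ => (0:ℝ)) ∈ almostEntropic n :=
  subset_closure (zero_entropic n)

lemma almost_nonneg_mono {n : ℕ} {h : Finset (Fin n) → ℝ} (hh : h ∈ almostEntropic n) :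
    ∀ α, 0 ≤ h α ∧ h α ≤ h Finset.univ := by
  have hsub : almostEntropic n ⊆ {h : Finset (Fin n) → ℝ | ∀ α, 0 ≤ h α ∧ h α ≤ h Finset.univ} := by
    apply closure_minimal
    · intro h hh α
      exact ⟨entropic_nonneg hh α, entropic_mono hh α⟩
    · have : {h : Finset (Fin n) → ℝ | ∀ α, 0 ≤ h α ∧ h α ≤ h Finset.univ} =
          ⋂ α, ({h : Finset (Fin n) → ℝ | 0 ≤ h α} ∩ {h | h α ≤ h Finset.univ}) := by
        ext h; simp [Set.mem_iInter, Set.mem_setOf_eq, forall_and]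
      rw [this]
      apply isClosed_iInter
      intro α
      exact (isClosed_le continuous_const (continuous_apply α)).inter
        (isClosed_le (continuous_apply α) (continuous_apply Finset.univ))
  exact hsub hh

end Ent

namespace Ent

open scoped RealInnerProductSpace

noncomputable abbrev Esp (n : ℕ) := EuclideanSpace ℝ (Finset (Fin n))

noncomputable def toFun' (n : ℕ) : Esp n ≃L[ℝ] (Finset (Fin n) → ℝ) :=
  PiLp.continuousLinearEquiv 2 ℝ (fun _ : Finset (Fin n) => ℝ)

def KE (n : ℕ) : Set (Esp n) := (toFun' n) ⁻¹' (almostEntropic n)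

lemma KE_closed (n : ℕ) : IsClosed (KE n) :=
  (isClosed_closure (s := {h | IsEntropic n h})).preimage (toFun' n).continuous

lemma almost_smul {n : ℕ} {x : Finset (Fin n) → ℝ} (hx : x ∈ almostEntropic n) {t : ℝ}
    (ht : 0 ≤ t) : (fun α => t * x α) ∈ almostEntropic n := by
  have h2 := almost_conic hx hx ht (le_refl 0)
  have e : (fun α => t * x α + 0 * x α) = fun α => t * x α := by funext α; ring
  rwa [e] at h2

lemma almost_add {n : ℕ} {x y : Finset (Fin n) → ℝ} (hx : x ∈ almostEntropic n)
    (hy : y ∈ almostEntropic n) : (fun α => x α + y α) ∈ almostEntropic n := by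
  have h2 := almost_conic hx hy (zero_le_one) (zero_le_one)
  have e : (fun α => 1 * x α + 1 * y α) = fun α => x α + y α := by funext α; ring
  rwa [e] at h2

noncomputable def Kcone (n : ℕ) : ConvexCone ℝ (Esp n) where
  carrier := KE n
  smul_mem' := by
    intro t ht x hx
    have hx' : (fun α => x α) ∈ almostEntropic n := hx
    have h2 := almost_smul hx' ht.le
    show (fun α => t * x α) ∈ almostEntropic n
    exact h2
  add_mem' := by
    intro x hx y hy
    have h2 := almost_add (x := fun α => x α) (y := fun α => y α) hx hy
    show (fun α => x α + y α) ∈ almostEntropic n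
    exact h2

lemma KE_zero_mem (n : ℕ) : (0 : Esp n) ∈ KE n := by
  show (fun _ => (0:ℝ)) ∈ almostEntropic n
  exact almost_zero_mem n

lemma innerE {n : ℕ} (x y : Esp n) : ⟪x, y⟫ = ∑ α, x α * y α := by
  simp [PiLp.inner_apply, RCLike.inner_apply, conj_trivial]
  exact Finset.sum_congr rfl fun _ _ => mul_comm _ _

lemma KE_nonneg_mono {n : ℕ} {x : Esp n} (hx : x ∈ KE n) :
    ∀ α, 0 ≤ x α ∧ x α ≤ x Finset.univ := by
  have hx' : (fun α => x α) ∈ almostEntropic n := hx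
  exact almost_nonneg_mono hx'

lemma KE_norm_le {n : ℕ} {x : Esp n} (hx : x ∈ KE n) :
    ‖x‖ ≤ Real.sqrt (Fintype.card (Finset (Fin n))) * x Finset.univ := by
  have hm := KE_nonneg_mono hx
  rw [EuclideanSpace.norm_eq]
  have hbound : ∑ α, ‖x α‖ ^ 2 ≤ (Fintype.card (Finset (Fin n))) * (x Finset.univ) ^ 2 := by
    calc ∑ α, ‖x α‖ ^ 2 ≤ ∑ _α : Finset (Fin n), (x Finset.univ) ^ 2 := by
          apply Finset.sum_le_sum
          intro α _
          rw [Real.norm_eq_abs, sq_abs]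
          exact pow_le_pow_left₀ (hm α).1 (hm α).2 2
      _ = (Fintype.card (Finset (Fin n))) * (x Finset.univ) ^ 2 := by
          rw [Finset.sum_const, Finset.card_univ, nsmul_eq_mul]
  calc Real.sqrt (∑ α, ‖x α‖ ^ 2)
      ≤ Real.sqrt ((Fintype.card (Finset (Fin n))) * (x Finset.univ) ^ 2) :=
        Real.sqrt_le_sqrt hbound
    _ = Real.sqrt (Fintype.card (Finset (Fin n))) * x Finset.univ := by
        rw [Real.sqrt_mul (by positivity), Real.sqrt_sq (hm Finset.univ).1]

end Ent

namespace Ent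

open scoped RealInnerProductSpace

variable {n k : ℕ}

def Sset (n k : ℕ) (cE : Fin k → Esp n) : Set (Esp n) :=
  {x | ∃ (u : Esp n) (lam : Fin k → ℝ), u ∈ ProperCone.innerDual (KE n) ∧ (∀ i, 0 ≤ lam i) ∧
    x = u + ∑ i, lam i • cE i}

noncomputable def Scone (n k : ℕ) (cE : Fin k → Esp n) : ConvexCone ℝ (Esp n) where
  carrier := Sset n k cE
  smul_mem' := by
    rintro t ht x ⟨u, lam, hu, hlam, rfl⟩
    refine ⟨t • u, fun i => t * lam i, (ProperCone.innerDual (KE n)).smul_mem hu ht.le,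
      fun i => mul_nonneg ht.le (hlam i), ?_⟩
    rw [smul_add, Finset.smul_sum]
    congr 1
    apply Finset.sum_congr rfl
    intro i _
    rw [smul_smul]
  add_mem' := by
    rintro x ⟨u, lam, hu, hlam, rfl⟩ y ⟨u', lam', hu', hlam', rfl⟩
    refine ⟨u + u', fun i => lam i + lam' i, (ProperCone.innerDual (KE n)).add_mem hu hu',
      fun i => add_nonneg (hlam i) (hlam' i), ?_⟩
    have : ∑ i, ((fun i => lam i + lam' i) i) • cE i =
        ∑ i, lam i • cE i + ∑ i, lam' i • cE i := by
      rw [← Finset.sum_add_distrib]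
      apply Finset.sum_congr rfl
      intro i _
      rw [add_smul]
    rw [this]
    abel

lemma zero_mem_Sset (cE : Fin k → Esp n) : (0 : Esp n) ∈ Sset n k cE := by
  refine ⟨0, fun _ => 0, (ProperCone.innerDual (KE n)).zero_mem, fun _ => le_refl 0, by simp⟩

lemma cE_mem_Sset (cE : Fin k → Esp n) (i : Fin k) : cE i ∈ Sset n k cE := by
  refine ⟨0, Pi.single i 1, (ProperCone.innerDual (KE n)).zero_mem, ?_, ?_⟩
  · intro j
    rcases eq_or_ne j i with rfl | hj
    · simp
    · simp [Pi.single_apply, if_neg hj]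
  · simp [Pi.single_apply, ite_smul]

lemma claim1 (cE : Fin k → Esp n) (c0E : Esp n)
    (hyp : ∀ x ∈ KE n, (∀ i, 0 ≤ ⟪cE i, x⟫) → 0 ≤ ⟪c0E, x⟫) :
    c0E ∈ closure (Sset n k cE) := by
  by_contra hnot
  set M := (Scone n k cE).closure with hM
  have hMne : (M : Set (Esp n)).Nonempty :=
    ⟨0, subset_closure (zero_mem_Sset cE)⟩
  have hMcl : IsClosed (M : Set (Esp n)) := by
    rw [hM, ConvexCone.coe_closure]
    exact isClosed_closure
  have hnmem : c0E ∉ M := by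
    intro hmem
    rw [hM, ← SetLike.mem_coe, ConvexCone.coe_closure] at hmem
    exact hnot hmem
  obtain ⟨y, hy1', hy2'⟩ :=
    ProperCone.hyperplane_separation' ({ toSubmodule := (M.toPointedCone
      (ConvexCone.Pointed.of_nonempty_of_isClosed hMne hMcl)), isClosed' := by exact hMcl } :
        ProperCone ℝ (Esp n)) (x₀ := c0E) hnmem
  have hy1 : ∀ x ∈ M, 0 ≤ ⟪x, y⟫ := hy1'
  have hy2 : ⟪y, c0E⟫ < 0 := by rw [real_inner_comm]; exact hy2'
  have hyK : y ∈ KE n := by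
    let KP : ProperCone ℝ (Esp n) :=
      { toSubmodule := (Kcone n).toPointedCone (KE_zero_mem n)
        isClosed' := by exact KE_closed n }
    have hbip := ProperCone.innerDual_innerDual KP
    have : y ∈ ProperCone.innerDual (ProperCone.innerDual (KP : Set (Esp n))) := by
      rw [ProperCone.mem_innerDual]
      intro u hu
      apply hy1
      rw [hM, ← SetLike.mem_coe, ConvexCone.coe_closure]
      exact subset_closure ⟨u, fun _ => 0, hu, fun _ => le_refl 0, by simp⟩
    rw [hbip] at this
    exact this
  have hant : ∀ i, 0 ≤ ⟪cE i, y⟫ := by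
    intro i
    apply hy1
    rw [hM, ← SetLike.mem_coe, ConvexCone.coe_closure]
    exact subset_closure (cE_mem_Sset cE i)
  have := hyp y hyK hant
  rw [real_inner_comm] at this
  linarith

lemma claim2 (cE : Fin k → Esp n) (c0E : Esp n)
    (hyp : ∀ x ∈ KE n, (∀ i, 0 ≤ ⟪cE i, x⟫) → 0 ≤ ⟪c0E, x⟫) {ε : ℝ} (hε : 0 < ε) :
    ∃ lam : Fin k → ℝ, (∀ i, 0 ≤ lam i) ∧
      ∀ x ∈ KE n, (∑ i, lam i * ⟪cE i, x⟫) ≤ ⟪c0E, x⟫ + ε * x Finset.univ := by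
  set C : ℝ := Real.sqrt (Fintype.card (Finset (Fin n))) with hCdef
  have hC : 0 < C := Real.sqrt_pos.2 (by exact_mod_cast Fintype.card_pos)
  have hcl := claim1 cE c0E hyp
  rw [Metric.mem_closure_iff] at hcl
  obtain ⟨y, hyS, hyd⟩ := hcl (ε / C) (div_pos hε hC)
  obtain ⟨u, lam, hu, hlam, rfl⟩ := hyS
  refine ⟨lam, hlam, ?_⟩
  intro x hx
  have hxu : 0 ≤ x Finset.univ := (KE_nonneg_mono hx Finset.univ).1
  have hypc : ⟪u + ∑ i, lam i • cE i, x⟫ = ⟪u, x⟫ + ∑ i, lam i * ⟪cE i, x⟫ := by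
    rw [inner_add_left, sum_inner]
    congr 1
    apply Finset.sum_congr rfl
    intro i _
    rw [real_inner_smul_left]
  have hu0 : 0 ≤ ⟪u, x⟫ := by
    rw [real_inner_comm]
    exact ProperCone.mem_innerDual.1 hu hx
  have hdiff : ⟪(u + ∑ i, lam i • cE i) - c0E, x⟫ ≤ ε * x Finset.univ := by
    calc ⟪(u + ∑ i, lam i • cE i) - c0E, x⟫ ≤ ‖(u + ∑ i, lam i • cE i) - c0E‖ * ‖x‖ :=
          real_inner_le_norm _ _
      _ ≤ (ε / C) * (C * x Finset.univ) := by
          apply mul_le_mul _ (KE_norm_le hx) (norm_nonneg x) (div_pos hε hC).le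
          rw [← norm_sub_rev]
          rw [dist_eq_norm] at hyd
          exact hyd.le
      _ = ε * x Finset.univ := by
          rw [← mul_assoc, div_mul_cancel₀ ε hC.ne']
  have hsub : ⟪(u + ∑ i, lam i • cE i) - c0E, x⟫ =
      ⟪u + ∑ i, lam i • cE i, x⟫ - ⟪c0E, x⟫ := by
    rw [inner_sub_left]
  rw [hsub, hypc] at hdiff
  linarith

end Ent

namespace Ent

open scoped RealInnerProductSpace

lemma le_of_all_eps {a b : ℝ} (h : ∀ ε : ℝ, 0 < ε → a ≤ b + ε) : a ≤ b := by
  by_contra hc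
  push_neg at hc
  have := h ((a - b)/2) (by linarith)
  linarith

noncomputable def toE (n : ℕ) : (Finset (Fin n) → ℝ) → Esp n := (WithLp.equiv 2 _).symm

lemma inner_toE {n : ℕ} (g h : Finset (Fin n) → ℝ) :
    ⟪toE n g, toE n h⟫ = ∑ α, g α * h α := innerE _ _

lemma inner_toE' {n : ℕ} (g : Finset (Fin n) → ℝ) (x : Esp n) :
    ⟪toE n g, x⟫ = ∑ α, g α * x α := innerE _ _

end Ent

open scoped RealInnerProductSpace

/-- Corollary 4.10: moving all antecedents of a conditional information
inequality, valid over the almost-entropic cone `cl Γ_n^*`, into the consequent; with the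
`ε = 0` refinement when the antecedents `{c_1, …, c_k}` have slack. -/
theorem stmt9 (n : ℕ) (hn : 1 ≤ n) (k : ℕ)
    (c : Fin k → Finset (Fin n) → ℝ) (c₀ : Finset (Fin n) → ℝ) :
    ((∀ h ∈ almostEntropic n,
        (∀ i : Fin k, 0 ≤ ∑ α, c i α * h α) → 0 ≤ ∑ α, c₀ α * h α) ↔
      (∀ ε > (0 : ℝ), ∃ lam : Fin k → ℝ, (∀ i, 0 ≤ lam i) ∧
        ∀ h ∈ almostEntropic n,
          (∑ i, lam i * ∑ α, c i α * h α) ≤ (∑ α, c₀ α * h α) + ε * h Finset.univ)) ∧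
    ((∃ h ∈ almostEntropic n, ∀ i : Fin k, 0 < ∑ α, c i α * h α) →
      ((∀ h ∈ almostEntropic n,
          (∀ i : Fin k, 0 ≤ ∑ α, c i α * h α) → 0 ≤ ∑ α, c₀ α * h α) ↔
        (∃ lam : Fin k → ℝ, (∀ i, 0 ≤ lam i) ∧
          ∀ h ∈ almostEntropic n,
            (∑ i, lam i * ∑ α, c i α * h α) ≤ ∑ α, c₀ α * h α))) := by
  classical
  -- Part 1, forward direction
  have part1fwd : (∀ h ∈ almostEntropic n,
        (∀ i : Fin k, 0 ≤ ∑ α, c i α * h α) → 0 ≤ ∑ α, c₀ α * h α) →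
      ∀ ε > (0 : ℝ), ∃ lam : Fin k → ℝ, (∀ i, 0 ≤ lam i) ∧
        ∀ h ∈ almostEntropic n,
          (∑ i, lam i * ∑ α, c i α * h α) ≤ (∑ α, c₀ α * h α) + ε * h Finset.univ := by
    intro hyp ε hε
    have hypE : ∀ x ∈ Ent.KE n,
        (∀ i, 0 ≤ ⟪Ent.toE n (c i), x⟫) → 0 ≤ ⟪Ent.toE n c₀, x⟫ := by
      intro x hx hant
      have hx' : (fun α => x α) ∈ almostEntropic n := hx
      have hant' : ∀ i : Fin k, 0 ≤ ∑ α, c i α * x α := by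
        intro i
        have := hant i
        rwa [Ent.inner_toE'] at this
      have key := hyp (fun α => x α) hx' hant'
      rw [Ent.inner_toE']
      exact key
    obtain ⟨lam, hlam, hineq⟩ := Ent.claim2 (fun i => Ent.toE n (c i)) (Ent.toE n c₀) hypE hε
    refine ⟨lam, hlam, ?_⟩
    intro h hh
    have key := hineq (Ent.toE n h) (show Ent.toE n h ∈ Ent.KE n from hh)
    have e1 : ∀ i, ⟪Ent.toE n (c i), Ent.toE n h⟫ = ∑ α, c i α * h α :=
      fun i => Ent.inner_toE _ _
    have e2 : ⟪Ent.toE n c₀, Ent.toE n h⟫ = ∑ α, c₀ α * h α := Ent.inner_toE _ _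
    have e3 : (Ent.toE n h) Finset.univ = h Finset.univ := rfl
    simp only [e1, e2, e3] at key
    exact key
  -- Part 1, backward direction
  have part1bwd : (∀ ε > (0 : ℝ), ∃ lam : Fin k → ℝ, (∀ i, 0 ≤ lam i) ∧
        ∀ h ∈ almostEntropic n,
          (∑ i, lam i * ∑ α, c i α * h α) ≤ (∑ α, c₀ α * h α) + ε * h Finset.univ) →
      (∀ h ∈ almostEntropic n,
        (∀ i : Fin k, 0 ≤ ∑ α, c i α * h α) → 0 ≤ ∑ α, c₀ α * h α) := by
    intro hyp2 h hh hant
    have hu : 0 ≤ h Finset.univ := (Ent.almost_nonneg_mono hh Finset.univ).1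
    apply Ent.le_of_all_eps
    intro ε' hε'
    have hεpos : 0 < ε' / (h Finset.univ + 1) := div_pos hε' (by linarith)
    obtain ⟨lam, hlam, hineq⟩ := hyp2 (ε' / (h Finset.univ + 1)) hεpos
    have h1 := hineq h hh
    have h2 : (0:ℝ) ≤ ∑ i, lam i * ∑ α, c i α * h α :=
      Finset.sum_nonneg fun i _ => mul_nonneg (hlam i) (hant i)
    have h3 : (ε' / (h Finset.univ + 1)) * h Finset.univ ≤ ε' := by
      calc (ε' / (h Finset.univ + 1)) * h Finset.univ
          ≤ (ε' / (h Finset.univ + 1)) * (h Finset.univ + 1) :=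
            mul_le_mul_of_nonneg_left (by linarith) hεpos.le
        _ = ε' := div_mul_cancel₀ ε' (by linarith)
    linarith
  refine ⟨⟨part1fwd, part1bwd⟩, ?_⟩
  rintro ⟨h₀, hh₀, hslack⟩
  constructor
  · -- slack: (1) → existence of lam with ε = 0
    intro hyp
    have hu₀ : 0 ≤ h₀ Finset.univ := (Ent.almost_nonneg_mono hh₀ Finset.univ).1
    set B : Fin k → ℝ :=
      fun i => ((∑ α, c₀ α * h₀ α) + h₀ Finset.univ) / (∑ α, c i α * h₀ α) with hBdef
    set Λ : ℕ → Set (Fin k → ℝ) := fun m => {lam | (∀ i, 0 ≤ lam i ∧ lam i ≤ B i) ∧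
      ∀ h ∈ almostEntropic n,
        (∑ i, lam i * ∑ α, c i α * h α) ≤
          (∑ α, c₀ α * h α) + (1/((m:ℝ)+1)) * h Finset.univ} with hΛdef
    have hΛsub : ∀ m, Λ (m+1) ⊆ Λ m := by
      intro m lam hlam
      refine ⟨hlam.1, ?_⟩
      intro h hh
      have key := hlam.2 h hh
      have huh : 0 ≤ h Finset.univ := (Ent.almost_nonneg_mono hh Finset.univ).1
      have hmono : (1:ℝ)/(((m+1:ℕ):ℝ)+1) ≤ 1/((m:ℝ)+1) := by
        push_cast
        apply one_div_le_one_div_of_le <;> linarith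
      have := mul_le_mul_of_nonneg_right hmono huh
      linarith
    have hΛne : ∀ m, (Λ m).Nonempty := by
      intro m
      have hεm : (0:ℝ) < 1/((m:ℝ)+1) := by positivity
      obtain ⟨lam, hlam, hineq⟩ := part1fwd hyp (1/((m:ℝ)+1)) hεm
      refine ⟨lam, ⟨?_, hineq⟩⟩
      intro i
      refine ⟨hlam i, ?_⟩
      have key := hineq h₀ hh₀
      have hone : (1:ℝ)/((m:ℝ)+1) ≤ 1 := by
        rw [div_le_one (by positivity)]
        have : (0:ℝ) ≤ (m:ℝ) := Nat.cast_nonneg m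
        linarith
      have hterm : lam i * (∑ α, c i α * h₀ α) ≤ ∑ j, lam j * (∑ α, c j α * h₀ α) := by
        apply Finset.single_le_sum (f := fun j => lam j * (∑ α, c j α * h₀ α)) ?_
          (Finset.mem_univ i)
        intro j _
        exact mul_nonneg (hlam j) (hslack j).le
      have hone' : (1/((m:ℝ)+1)) * h₀ Finset.univ ≤ h₀ Finset.univ :=
        mul_le_of_le_one_left hu₀ hone
      have hbound : lam i * (∑ α, c i α * h₀ α) ≤ (∑ α, c₀ α * h₀ α) + h₀ Finset.univ := by
        linarith
      show lam i ≤ B i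
      rw [hBdef]
      simp only
      rw [le_div_iff₀ (hslack i)]
      exact hbound
    have hΛcl : ∀ m, IsClosed (Λ m) := by
      intro m
      have h1 : IsClosed {lam : Fin k → ℝ | ∀ i, 0 ≤ lam i ∧ lam i ≤ B i} := by
        rw [Set.setOf_forall]
        apply isClosed_iInter
        intro i
        rw [Set.setOf_and]
        exact (isClosed_le continuous_const (continuous_apply i)).inter
          (isClosed_le (continuous_apply i) continuous_const)
      have h2 : IsClosed {lam : Fin k → ℝ | ∀ h ∈ almostEntropic n,
          (∑ i, lam i * ∑ α, c i α * h α) ≤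
            (∑ α, c₀ α * h α) + (1/((m:ℝ)+1)) * h Finset.univ} := by
        rw [Set.setOf_forall]
        apply isClosed_iInter
        intro h
        by_cases hh : h ∈ almostEntropic n
        · have : {lam : Fin k → ℝ | h ∈ almostEntropic n →
              (∑ i, lam i * ∑ α, c i α * h α) ≤
                (∑ α, c₀ α * h α) + (1/((m:ℝ)+1)) * h Finset.univ} =
              {lam : Fin k → ℝ | (∑ i, lam i * ∑ α, c i α * h α) ≤
                (∑ α, c₀ α * h α) + (1/((m:ℝ)+1)) * h Finset.univ} := by
            ext lam; simp [hh]
          rw [this]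
          apply isClosed_le ?_ continuous_const
          exact continuous_finset_sum Finset.univ
            (fun i _ => (continuous_apply i).mul continuous_const)
        · have : {lam : Fin k → ℝ | h ∈ almostEntropic n →
              (∑ i, lam i * ∑ α, c i α * h α) ≤
                (∑ α, c₀ α * h α) + (1/((m:ℝ)+1)) * h Finset.univ} = Set.univ := by
            ext lam; simp [hh]
          rw [this]
          exact isClosed_univ
      have : Λ m = {lam : Fin k → ℝ | ∀ i, 0 ≤ lam i ∧ lam i ≤ B i} ∩
          {lam : Fin k → ℝ | ∀ h ∈ almostEntropic n,
            (∑ i, lam i * ∑ α, c i α * h α) ≤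
              (∑ α, c₀ α * h α) + (1/((m:ℝ)+1)) * h Finset.univ} := by
        rw [hΛdef]
        ext lam
        simp only [Set.mem_setOf_eq, Set.mem_inter_iff]
      rw [this]
      exact h1.inter h2
    have hΛ0c : IsCompact (Λ 0) := by
      apply IsCompact.of_isClosed_subset
        (isCompact_univ_pi (fun i => isCompact_Icc (a := (0:ℝ)) (b := B i))) (hΛcl 0)
      intro lam hlam
      rw [Set.mem_univ_pi]
      intro i
      exact ⟨(hlam.1 i).1, (hlam.1 i).2⟩
    obtain ⟨lam, hlammem⟩ :=
      IsCompact.nonempty_iInter_of_sequence_nonempty_isCompact_isClosed Λ hΛsub hΛne hΛ0c hΛcl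
    rw [Set.mem_iInter] at hlammem
    refine ⟨lam, fun i => ((hlammem 0).1 i).1, ?_⟩
    intro h hh
    apply Ent.le_of_all_eps
    intro ε' hε'
    have huh : 0 ≤ h Finset.univ := (Ent.almost_nonneg_mono hh Finset.univ).1
    obtain ⟨m, hm⟩ := exists_nat_one_div_lt
      (div_pos hε' (show (0:ℝ) < h Finset.univ + 1 by linarith))
    have key := (hlammem m).2 h hh
    have hfin : (1/((m:ℝ)+1)) * h Finset.univ ≤ ε' := by
      have step1 : (1/((m:ℝ)+1)) * h Finset.univ ≤
          (ε'/(h Finset.univ + 1)) * h Finset.univ :=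
        mul_le_mul_of_nonneg_right hm.le huh
      have step2 : (ε'/(h Finset.univ + 1)) * h Finset.univ ≤ ε' := by
        rw [div_mul_eq_mul_div, div_le_iff₀ (show (0:ℝ) < h Finset.univ + 1 by linarith)]
        nlinarith
      linarith
    linarith
  · rintro ⟨lam, hlam, hineq⟩ h hh hant
    have h1 := hineq h hh
    have h2 : (0:ℝ) ≤ ∑ i, lam i * ∑ α, c i α * h α :=
      Finset.sum_nonneg fun i _ => mul_nonneg (hlam i) (hant i)
    linarith
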